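/- Let Sλ be a densely defined weighted shift on a directed tree T with weights λ, and c ∈ ℝ₊. Then ⟨E(σ)|Sλ|f, |Sλ|f⟩ ≤ c⟨E(σ)Sλ f, Sλ f⟩ holds for all Borel σ ⊆ ℝ₊ and all f ∈ dom(Sλ) (where E is the spectral measure of |Sλ|) if and only if for every u ∈ V: ‖Sλ e_u‖² ≤ c · Σ_{v ∈ Chi(u), ‖Sλ e_v‖ = ‖Sλ e_u‖} |λ_v|². -/

import Mathlib

open ContinuousLinearMap MeasureTheory

local notation "⟪" x ", " y "⟫" => @inner ℂ _ _ x y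

/-- A directed tree encoded by a parent function: `isRoot` singles out the root (if any),
`par` assigns to each non-root vertex its parent (and fixes the root); the tree is acyclic
and connected. `V° = {v | ¬ isRoot v}` and `Chi u = {v ∈ V° | par v = u}`. -/
structure DirectedTree (V : Type*) : Type _ where
  isRoot : V → Prop
  par : V → V
  root_unique : ∀ u v, isRoot u → isRoot v → u = v
  par_root : ∀ v, isRoot v → par v = v
  par_ne_self : ∀ v, ¬ isRoot v → par v ≠ v
  acyclic : ∀ (v : V) (n : ℕ), 0 < n → par^[n] v = v → isRoot v
  connected : ∀ u v : V, ∃ m n : ℕ, par^[m] u = par^[n] v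

open Classical in
/-- The formal weighted-shift action: `(Λ f)(v) = λ_v · f(par v)` for non-root `v`, `0` at
the root. The weighted shift `S_λ` is the operator `f ↦ Λ f` on the domain
`{f ∈ ℓ²(V) | Λ f ∈ ℓ²(V)}`. -/
noncomputable def shiftFun {V : Type*} (T : DirectedTree V) (lam : V → ℂ) (f : V → ℂ) :
    V → ℂ :=
  fun v => if T.isRoot v then 0 else lam v * f (T.par v)

open Classical in
/-- The basis vector `e_u` of `ℓ²(V)` as a plain function. -/
noncomputable def eVec {V : Type*} (u : V) : V → ℂ := fun v => if v = u then 1 else 0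

/-- `‖S_λ e_u‖`, given that `e_u` lies in the domain of `S_λ`. -/
noncomputable def swnorm {V : Type*} (T : DirectedTree V) (lam : V → ℂ)
    (he : ∀ u : V, Memℓp (shiftFun T lam (eVec u)) 2) (u : V) : ℝ :=
  ‖(⟨shiftFun T lam (eVec u), he u⟩ : lp (fun _ : V => ℂ) 2)‖

/-- `E` is the spectral measure of the (possibly unbounded) self-adjoint diagonal operator on
`ℓ²(V)` with diagonal `d` (together with the scalar measures `μ f = ⟨E(·)f, f⟩`). -/
structure IsDiagSpectralMeasure {V : Type*} (d : V → ℝ)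
    (E : Set ℝ → (lp (fun _ : V => ℂ) 2 →L[ℂ] lp (fun _ : V => ℂ) 2))
    (μ : lp (fun _ : V => ℂ) 2 → Measure ℝ) : Prop where
  selfadj : ∀ σ : Set ℝ, MeasurableSet σ → ContinuousLinearMap.adjoint (E σ) = E σ
  inter : ∀ σ τ : Set ℝ, MeasurableSet σ → MeasurableSet τ → E σ ∘L E τ = E (σ ∩ τ)
  univ : E Set.univ = 1
  compat : ∀ f (σ : Set ℝ), MeasurableSet σ → (μ f σ).toReal = (⟪E σ f, f⟫).re
  domIff : ∀ f : lp (fun _ : V => ℂ) 2,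
    Memℓp (fun v => (d v : ℂ) * f v) 2 ↔ Integrable (fun x => x ^ 2) (μ f)
  moment1 : ∀ (f : lp (fun _ : V => ℂ) 2) (hf : Memℓp (fun v => (d v : ℂ) * f v) 2),
    (⟪(⟨fun v => (d v : ℂ) * f v, hf⟩ : lp (fun _ : V => ℂ) 2), f⟫).re = ∫ x, x ∂(μ f)
  moment2 : ∀ (f : lp (fun _ : V => ℂ) 2) (hf : Memℓp (fun v => (d v : ℂ) * f v) 2),
    ‖(⟨fun v => (d v : ℂ) * f v, hf⟩ : lp (fun _ : V => ℂ) 2)‖ ^ 2 = ∫ x, x ^ 2 ∂(μ f)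

open scoped ENNReal NNReal

noncomputable section
namespace WQN
variable {V : Type*}

abbrev H (V : Type*) := lp (fun _ : V => ℂ) 2

lemma re_tsum_inner (f g : H V) :
    RCLike.re (∑' v, ⟪f v, g v⟫) = ∑' v, RCLike.re ⟪f v, g v⟫ := by
  have := (RCLike.reCLM (K := ℂ)).map_tsum (lp.summable_inner f g)
  simpa using this

lemma norm_sq_eq (f : H V) : ‖f‖ ^ 2 = ∑' v, ‖f v‖ ^ 2 := by
  rw [@norm_sq_eq_re_inner ℂ, lp.inner_eq_tsum, re_tsum_inner f f]
  refine tsum_congr fun v => ?_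
  rw [← @norm_sq_eq_re_inner ℂ]

lemma re_inner_eq (f g : H V) :
    (⟪f, g⟫).re = ∑' v, ((starRingEnd ℂ) (f v) * g v).re := by
  rw [lp.inner_eq_tsum]
  refine (re_tsum_inner f g).trans (tsum_congr fun v => ?_)
  rw [RCLike.inner_apply, mul_comm]
  rfl

lemma memℓp_of_le {f g : V → ℂ} (hg : Memℓp g 2) (h : ∀ v, ‖f v‖ ≤ ‖g v‖) : Memℓp f 2 := by
  apply memℓp_gen
  have h2 : (0:ℝ) < (2 : ENNReal).toReal := by norm_num
  refine Summable.of_nonneg_of_le (fun v => Real.rpow_nonneg (norm_nonneg _) _)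
    (fun v => Real.rpow_le_rpow (norm_nonneg _) (h v) (le_of_lt h2)) (hg.summable h2)

lemma summable_norm_sq (f : H V) : Summable fun v => ‖f v‖ ^ 2 := by
  have := (lp.memℓp f).summable (by norm_num : (0:ℝ) < (2 : ENNReal).toReal)
  have e : ∀ v : V, ‖f v‖ ^ ((2:ENNReal).toReal) = ‖f v‖ ^ 2 := by
    intro v
    rw [show ((2:ENNReal).toReal) = (2:ℝ) by norm_num]
    norm_num [Real.rpow_natCast]
  simpa [e] using this

end WQN
namespace WQN
variable {V : Type*}

open Classical in
def indFun (P : V → Prop) (f : V → ℂ) : V → ℂ := fun v => if P v then f v else 0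

lemma norm_indFun_le (P : V → Prop) (f : V → ℂ) (v : V) : ‖indFun P f v‖ ≤ ‖f v‖ := by
  unfold indFun; split <;> simp

lemma memℓp_ind (P : V → Prop) (f : H V) : Memℓp (indFun P (⇑f)) 2 :=
  memℓp_of_le (lp.memℓp f) (norm_indFun_le P f)

lemma indFun_add (P : V → Prop) (f g : V → ℂ) :
    indFun P (f + g) = indFun P f + indFun P g := by
  funext v
  simp only [indFun, Pi.add_apply]
  split <;> simp

lemma indFun_smul (P : V → Prop) (c : ℂ) (f : V → ℂ) :
    indFun P (c • f) = c • indFun P f := by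
  funext v
  simp only [indFun, Pi.smul_apply, smul_eq_mul]
  split <;> simp

def indL (P : V → Prop) : H V →ₗ[ℂ] H V where
  toFun f := ⟨indFun P (⇑f), memℓp_ind P f⟩
  map_add' f g := by
    apply lp.ext
    simp only [lp.coeFn_add]
    show indFun P (⇑(f + g)) = indFun P (⇑f) + indFun P (⇑g)
    rw [lp.coeFn_add, indFun_add]
  map_smul' c f := by
    apply lp.ext
    show indFun P (⇑(c • f)) = ⇑(c • (⟨indFun P (⇑f), memℓp_ind P f⟩ : H V))
    rw [lp.coeFn_smul, lp.coeFn_smul, indFun_smul]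

lemma norm_indL_le (P : V → Prop) (f : H V) : ‖indL P f‖ ≤ 1 * ‖f‖ := by
  rw [one_mul]
  have h1 : ‖indL P f‖ ^ 2 ≤ ‖f‖ ^ 2 := by
    rw [norm_sq_eq, norm_sq_eq]
    refine Summable.tsum_le_tsum (fun v => ?_) (summable_norm_sq _) (summable_norm_sq f)
    have := norm_indFun_le P (⇑f) v
    exact pow_le_pow_left₀ (norm_nonneg _) this 2
  have := Real.sqrt_le_sqrt h1
  rwa [Real.sqrt_sq (norm_nonneg _), Real.sqrt_sq (norm_nonneg _)] at this

def indCLM (P : V → Prop) : H V →L[ℂ] H V :=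
  LinearMap.mkContinuous (indL P) 1 (norm_indL_le P)

open Classical in
lemma indCLM_apply (P : V → Prop) (f : H V) (v : V) :
    (indCLM P f) v = if P v then f v else 0 := rfl

open Classical in
lemma re_inner_indicator (P : V → Prop) (f : H V) :
    (⟪indCLM P f, f⟫).re = ∑' v, if P v then ‖f v‖ ^ 2 else 0 := by
  rw [re_inner_eq]
  refine tsum_congr fun v => ?_
  rw [indCLM_apply]
  split_ifs with h
  · exact (congrArg Complex.re (Complex.conj_mul' (f v))).trans
      (by rw [← Complex.ofReal_pow, Complex.ofReal_re])
  · simp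


variable {V : Type*}

lemma summable_iff_tsum_ofReal_ne_top {w : V → ℝ} (hw : ∀ v, 0 ≤ w v) :
    Summable w ↔ (∑' v, ENNReal.ofReal (w v)) ≠ ∞ := by
  have e : (fun v => ((Real.toNNReal (w v) : ℝ≥0) : ℝ)) = w := by
    funext v; exact Real.coe_toNNReal _ (hw v)
  have h2 := ENNReal.tsum_coe_ne_top_iff_summable_coe (f := fun v => (w v).toNNReal)
  rw [e] at h2
  exact h2.symm

lemma tsum_ofReal_toReal {w : V → ℝ} (hw : ∀ v, 0 ≤ w v) :
    (∑' v, ENNReal.ofReal (w v)).toReal = ∑' v, w v := by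
  by_cases hs : Summable w
  · rw [← ENNReal.ofReal_tsum_of_nonneg hw hs, ENNReal.toReal_ofReal (tsum_nonneg hw)]
  · rw [tsum_eq_zero_of_not_summable hs]
    have h : (∑' v, ENNReal.ofReal (w v)) = ∞ := by
      by_contra h
      exact hs ((summable_iff_tsum_ofReal_ne_top hw).mpr h)
    simp [h]

lemma memℓp_two_iff (g : V → ℂ) : Memℓp g 2 ↔ Summable (fun v => ‖g v‖ ^ 2) := by
  rw [memℓp_gen_iff (by norm_num : (0:ℝ) < (2:ENNReal).toReal)]
  have e : ∀ v : V, ‖g v‖ ^ ((2:ENNReal).toReal) = ‖g v‖ ^ 2 := by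
    intro v
    rw [show ((2:ENNReal).toReal) = ((2:ℕ):ℝ) by norm_num, Real.rpow_natCast]
  exact summable_congr e

def diagE (d : V → ℝ) : Set ℝ → (H V →L[ℂ] H V) := fun σ => indCLM (fun v => d v ∈ σ)

def diagμ (d : V → ℝ) (f : H V) : Measure ℝ :=
  Measure.sum (fun v => ENNReal.ofReal (‖f v‖ ^ 2) • Measure.dirac (d v))

lemma lintegral_diagμ (d : V → ℝ) (f : H V) {g : ℝ → ℝ≥0∞} (hg : Measurable g) :
    ∫⁻ x, g x ∂(diagμ d f) = ∑' v, ENNReal.ofReal (‖f v‖ ^ 2) * g (d v) := by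
  unfold diagμ
  rw [lintegral_sum_measure]
  refine tsum_congr fun v => ?_
  rw [lintegral_smul_measure, lintegral_dirac' _ hg, smul_eq_mul]

lemma diagμ_apply (d : V → ℝ) (f : H V) {σ : Set ℝ} (hσ : MeasurableSet σ) :
    diagμ d f σ = ∑' v, ENNReal.ofReal (‖f v‖ ^ 2) * σ.indicator 1 (d v) := by
  unfold diagμ
  rw [Measure.sum_apply _ hσ]
  refine tsum_congr fun v => ?_
  rw [Measure.smul_apply, Measure.dirac_apply' _ hσ, smul_eq_mul]

open Classical in
lemma diagμ_toReal (d : V → ℝ) (f : H V) {σ : Set ℝ} (hσ : MeasurableSet σ) :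
    (diagμ d f σ).toReal = ∑' v, if d v ∈ σ then ‖f v‖ ^ 2 else 0 := by
  rw [diagμ_apply d f hσ]
  have e : ∀ v : V, ENNReal.ofReal (‖f v‖ ^ 2) * σ.indicator 1 (d v)
      = ENNReal.ofReal (if d v ∈ σ then ‖f v‖ ^ 2 else 0) := by
    intro v
    rw [Set.indicator_apply]
    split_ifs <;> simp
  rw [tsum_congr e, tsum_ofReal_toReal]
  intro v; split_ifs <;> positivity

lemma ae_nonneg_diagμ (d : V → ℝ) (hd : ∀ v, 0 ≤ d v) (f : H V) :
    ∀ᵐ x ∂(diagμ d f), (0:ℝ) ≤ x := by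
  rw [ae_iff]
  have hset : {x : ℝ | ¬ (0:ℝ) ≤ x} = Set.Iio 0 := by
    ext x; simp [not_le]
  rw [hset, diagμ_apply d f measurableSet_Iio]
  have e : ∀ v : V, ENNReal.ofReal (‖f v‖ ^ 2) * Set.indicator (Set.Iio (0:ℝ)) 1 (d v) = 0 := by
    intro v
    have hnm : d v ∉ Set.Iio (0:ℝ) := by simp [hd v]
    rw [Set.indicator_of_notMem hnm, mul_zero]
  rw [tsum_congr e, tsum_zero]

lemma ae_nonneg_diagμ' (d : V → ℝ) (hd : ∀ v, 0 ≤ d v) (f : H V) :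
    0 ≤ᵐ[diagμ d f] (fun x : ℝ => x) := by
  filter_upwards [ae_nonneg_diagμ d hd f] with x hx
  simpa using hx


lemma conj_mul_re (d : ℝ) (z : ℂ) : ((starRingEnd ℂ) ((d:ℂ) * z) * z).re = ‖z‖ ^ 2 * d := by
  rw [map_mul, Complex.conj_ofReal, mul_assoc, mul_comm ((starRingEnd ℂ) z) z, Complex.mul_conj]
  rw [Complex.normSq_eq_norm_sq, ← Complex.ofReal_mul, Complex.ofReal_re]
  ring

lemma norm_real_mul_sq (d : ℝ) (z : ℂ) : ‖(d:ℂ) * z‖ ^ 2 = ‖z‖ ^ 2 * d ^ 2 := by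
  rw [norm_mul, Complex.norm_real, Real.norm_eq_abs, mul_pow, sq_abs]; ring

lemma adjoint_indCLM (P : V → Prop) :
    ContinuousLinearMap.adjoint (indCLM P) = indCLM P := by
  refine (((indCLM P).eq_adjoint_iff (indCLM P)).mpr fun x y => ?_).symm
  rw [lp.inner_eq_tsum, lp.inner_eq_tsum]
  refine tsum_congr fun v => ?_
  rw [RCLike.inner_apply, RCLike.inner_apply, indCLM_apply, indCLM_apply]
  split_ifs
  · rfl
  · simp

lemma indCLM_comp (P Q : V → Prop) :
    indCLM P ∘L indCLM Q = indCLM (fun v => P v ∧ Q v) := by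
  refine ContinuousLinearMap.ext fun f => ?_
  apply lp.ext
  funext v
  rw [ContinuousLinearMap.comp_apply]
  rw [show ((indCLM P) ((indCLM Q) f) : V → ℂ) v = _ from indCLM_apply P _ v,
    indCLM_apply, indCLM_apply]
  split_ifs with h1 h2 h3 h3 <;> first | rfl | tauto

lemma indCLM_univ : indCLM (fun _ : V => True) = (1 : H V →L[ℂ] H V) := by
  refine ContinuousLinearMap.ext fun f => ?_
  apply lp.ext
  funext v
  rw [show ((indCLM (fun _ : V => True)) f : V → ℂ) v = _ from indCLM_apply _ f v]
  simp

open Classical in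
lemma isDiag (d : V → ℝ) (hd : ∀ v, 0 ≤ d v) :
    IsDiagSpectralMeasure d (diagE d) (diagμ d) := by
  constructor
  · exact fun σ _ => adjoint_indCLM _
  · intro σ τ _ _
    rw [show diagE d σ ∘L diagE d τ = _ from indCLM_comp _ _]
    exact congrArg indCLM (funext fun v => propext (Set.mem_inter_iff _ _ _).symm)
  · rw [show diagE d Set.univ = _ from
      congrArg indCLM (funext fun v => propext (by simp : d v ∈ Set.univ ↔ True))]
    exact indCLM_univ
  · intro f σ hσ
    rw [diagμ_toReal d f hσ]
    exact (re_inner_indicator (fun v => d v ∈ σ) f).symm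
  · intro f
    rw [memℓp_two_iff]
    have hg : Measurable (fun x : ℝ => ENNReal.ofReal (x ^ 2)) :=
      (measurable_id.pow_const 2).ennreal_ofReal
    have h1 : Integrable (fun x : ℝ => x ^ 2) (diagμ d f) ↔
        (∑' v, ENNReal.ofReal (‖f v‖ ^ 2 * d v ^ 2)) ≠ ⊤ := by
      constructor
      · intro h
        have h2 := h.hasFiniteIntegral
        rw [hasFiniteIntegral_iff_ofReal (Filter.Eventually.of_forall fun x => sq_nonneg x),
          lintegral_diagμ d f hg] at h2
        rw [tsum_congr fun v =>
          (ENNReal.ofReal_mul (by positivity : (0:ℝ) ≤ ‖f v‖ ^ 2) :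
            ENNReal.ofReal (‖f v‖ ^ 2 * d v ^ 2) = _)]
        exact h2.ne
      · intro h
        refine ⟨(measurable_id.pow_const 2).aestronglyMeasurable, ?_⟩
        rw [hasFiniteIntegral_iff_ofReal (Filter.Eventually.of_forall fun x => sq_nonneg x),
          lintegral_diagμ d f hg]
        rw [tsum_congr fun v =>
          (ENNReal.ofReal_mul (by positivity : (0:ℝ) ≤ ‖f v‖ ^ 2) :
            ENNReal.ofReal (‖f v‖ ^ 2 * d v ^ 2) = _)] at h
        exact h.lt_top
    rw [h1]
    rw [← summable_iff_tsum_ofReal_ne_top (fun v => by positivity)]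
    exact summable_congr fun v => by rw [norm_real_mul_sq]
  · intro f hf
    rw [integral_eq_lintegral_of_nonneg_ae (ae_nonneg_diagμ' d hd f)
      aestronglyMeasurable_id, lintegral_diagμ d f ENNReal.measurable_ofReal]
    rw [tsum_congr fun v => (ENNReal.ofReal_mul (by positivity : (0:ℝ) ≤ ‖f v‖ ^ 2)).symm,
      tsum_ofReal_toReal (fun v => mul_nonneg (by positivity) (hd v))]
    rw [re_inner_eq]
    exact tsum_congr fun v => conj_mul_re (d v) (f v)
  · intro f hf
    have hg : Measurable (fun x : ℝ => ENNReal.ofReal (x ^ 2)) :=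
      (measurable_id.pow_const 2).ennreal_ofReal
    have haesm : AEStronglyMeasurable (fun x : ℝ => x ^ 2) (diagμ d f) :=
      (measurable_id.pow_const 2).aestronglyMeasurable
    rw [integral_eq_lintegral_of_nonneg_ae
      (Filter.Eventually.of_forall fun x => sq_nonneg x) haesm,
      lintegral_diagμ d f hg]
    rw [tsum_congr fun v => (ENNReal.ofReal_mul (by positivity : (0:ℝ) ≤ ‖f v‖ ^ 2)).symm,
      tsum_ofReal_toReal (fun v => by positivity)]
    rw [norm_sq_eq]
    exact tsum_congr fun v => norm_real_mul_sq (d v) (f v)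

lemma ofReal_tsum_le_tsum_ofReal {w : V → ℝ} (hw : ∀ v, 0 ≤ w v) :
    ENNReal.ofReal (∑' v, w v) ≤ ∑' v, ENNReal.ofReal (w v) := by
  by_cases hs : Summable w
  · rw [ENNReal.ofReal_tsum_of_nonneg hw hs]
  · rw [tsum_eq_zero_of_not_summable hs]
    simp

lemma eVec_memℓp (u : V) : Memℓp (eVec u) 2 := by
  rw [memℓp_two_iff]
  apply summable_of_ne_finset_zero (s := {u})
  intro v hv
  simp only [Finset.mem_singleton] at hv
  simp [eVec, hv]

def euH (u : V) : H V := ⟨eVec u, eVec_memℓp u⟩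

open Classical in
lemma euH_apply (u v : V) : (euH u : V → ℂ) v = if v = u then 1 else 0 := rfl

lemma norm_sq_euH (u : V) : ‖euH u‖ ^ 2 = 1 := by
  classical
  rw [norm_sq_eq]
  have e : ∀ v : V, ‖(euH u : V → ℂ) v‖ ^ 2 = if v = u then 1 else 0 := by
    intro v
    rw [euH_apply]
    split_ifs <;> simp
  rw [tsum_congr e, tsum_ite_eq]

lemma inner_euH (u : V) (g : H V) : ⟪euH u, g⟫ = g u := by
  classical
  rw [lp.inner_eq_tsum]
  have e : ∀ v : V, ⟪(euH u : V → ℂ) v, g v⟫ = if v = u then g u else 0 := by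
    intro v
    rw [RCLike.inner_apply, euH_apply]
    split_ifs with h
    · subst h; simp
    · simp
  rw [tsum_congr e, tsum_ite_eq]

lemma memℓp_dmul_euH (d : V → ℝ) (u : V) :
    Memℓp (fun v => ((d v : ℝ) : ℂ) * (euH u : V → ℂ) v) 2 := by
  rw [memℓp_two_iff]
  apply summable_of_ne_finset_zero (s := {u})
  intro v hv
  simp only [Finset.mem_singleton] at hv
  rw [euH_apply]
  simp [hv]

lemma dsmul_euH (d : V → ℝ) (u : V)
    (hm : Memℓp (fun v => ((d v : ℝ) : ℂ) * (euH u : V → ℂ) v) 2) :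
    (⟨fun v => ((d v : ℝ) : ℂ) * (euH u : V → ℂ) v, hm⟩ : H V) = ((d u : ℝ) : ℂ) • euH u := by
  classical
  apply lp.ext
  funext v
  show ((d v : ℝ) : ℂ) * (euH u : V → ℂ) v = (((d u : ℝ) : ℂ) • euH u : H V) v
  rw [lp.coeFn_smul, Pi.smul_apply, smul_eq_mul, euH_apply]
  split_ifs with h
  · subst h; rfl
  · simp

section Abstract

variable {d : V → ℝ} {E : Set ℝ → (H V →L[ℂ] H V)} {μ : H V → Measure ℝ}

lemma E_inner_self (hE : IsDiagSpectralMeasure d E μ) {σ : Set ℝ} (hσ : MeasurableSet σ)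
    (x : H V) : ⟪E σ x, E σ x⟫ = ⟪x, E σ x⟫ := by
  have h1 : ⟪E σ x, E σ x⟫ = ⟪x, (ContinuousLinearMap.adjoint (E σ)) (E σ x)⟫ :=
    (ContinuousLinearMap.adjoint_inner_right (E σ) x (E σ x)).symm
  rw [h1, hE.selfadj σ hσ, show (E σ) ((E σ) x) = (E σ ∘L E σ) x from rfl,
    hE.inter σ σ hσ hσ, Set.inter_self]

lemma norm_sq_E (hE : IsDiagSpectralMeasure d E μ) {σ : Set ℝ} (hσ : MeasurableSet σ)
    (x : H V) : ‖E σ x‖ ^ 2 = (⟪E σ x, x⟫).re := by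
  rw [@norm_sq_eq_re_inner ℂ, E_inner_self hE hσ x, inner_re_symm]
  rfl

end Abstract

lemma re_inner_self (x : H V) : (⟪x, x⟫).re = ‖x‖ ^ 2 := by
  rw [@norm_sq_eq_re_inner ℂ]
  rfl

section Abstract2

variable {d : V → ℝ} {E : Set ℝ → (H V →L[ℂ] H V)} {μ : H V → Measure ℝ}

lemma mu_univ_toReal (hE : IsDiagSpectralMeasure d E μ) (u : V) :
    (μ (euH u) Set.univ).toReal = 1 := by
  rw [hE.compat (euH u) Set.univ MeasurableSet.univ, hE.univ,
    ContinuousLinearMap.one_apply, re_inner_self, norm_sq_euH]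

open Classical in
lemma mu_eu (hE : IsDiagSpectralMeasure d E μ) (u : V) {σ : Set ℝ}
    (hσ : MeasurableSet σ) :
    (μ (euH u) σ).toReal = if d u ∈ σ then 1 else 0 := by
  set ν := μ (euH u) with hν
  have hmem := memℓp_dmul_euH d u
  have hInt2 : Integrable (fun x : ℝ => x ^ 2) ν := (hE.domIff (euH u)).mp hmem
  have huniv : (ν Set.univ).toReal = 1 := mu_univ_toReal hE u
  have hfin : IsFiniteMeasure ν := by
    constructor
    rw [lt_top_iff_ne_top]
    intro h
    rw [h] at huniv
    simp at huniv
  set du := d u with hdu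
  have m1 : ∫ x, x ∂ν = du := by
    have h1 := hE.moment1 (euH u) hmem
    rw [dsmul_euH d u hmem, inner_smul_left, Complex.conj_ofReal,
      Complex.re_ofReal_mul, re_inner_self, norm_sq_euH, mul_one] at h1
    exact h1.symm
  have m2 : ∫ x, x ^ 2 ∂ν = du ^ 2 := by
    have h2 := hE.moment2 (euH u) hmem
    rw [dsmul_euH d u hmem, norm_smul, mul_pow, norm_sq_euH, mul_one,
      Complex.norm_real, Real.norm_eq_abs, sq_abs] at h2
    exact h2.symm
  have hI1 : Integrable (fun x : ℝ => x) ν := by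
    refine Integrable.mono' (hInt2.add (integrable_const 1)) aestronglyMeasurable_id
      (Filter.Eventually.of_forall fun x => ?_)
    show ‖x‖ ≤ x ^ 2 + 1
    rw [Real.norm_eq_abs]
    nlinarith [sq_abs x, abs_nonneg x, sq_nonneg (|x| - 1)]
  have e : (fun x : ℝ => (x - du) ^ 2) = fun x => (x ^ 2 - 2 * du * x) + du ^ 2 :=
    funext fun x => by ring
  have hI2 : Integrable (fun x : ℝ => x ^ 2 - 2 * du * x) ν :=
    hInt2.sub ((hI1.const_mul (2 * du)))
  have hIfull : Integrable (fun x : ℝ => (x - du) ^ 2) ν := by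
    rw [e]
    exact hI2.add (integrable_const _)
  have hexp : ∫ x, (x - du) ^ 2 ∂ν = 0 := by
    rw [e, integral_add hI2 (integrable_const _), integral_sub hInt2 (hI1.const_mul (2 * du))]
    have hmul : ∫ x, 2 * du * x ∂ν = 2 * du * ∫ x, x ∂ν := integral_const_mul (2 * du) _
    rw [hmul, m1, m2, integral_const, smul_eq_mul, measureReal_def, huniv]
    ring
  have hae : (fun x : ℝ => (x - du) ^ 2) =ᵐ[ν] 0 :=
    (integral_eq_zero_iff_of_nonneg (fun x => sq_nonneg _) hIfull).mp hexp
  have hnull : ν {du}ᶜ = 0 := by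
    have h1 := hae
    rw [Filter.EventuallyEq, ae_iff] at h1
    have hset : {x : ℝ | ¬ (x - du) ^ 2 = (0 : ℝ → ℝ) x} = ({du}ᶜ : Set ℝ) := by
      ext x
      simp [sub_eq_zero, pow_eq_zero_iff]
    rwa [hset] at h1
  have key : ν σ = ν (σ ∩ {du}) := by
    have h2 := measure_inter_add_diff (μ := ν) σ (measurableSet_singleton du)
    have hdiff : ν (σ \ {du}) = 0 :=
      measure_mono_null (fun x hx => hx.2) hnull
    rw [← h2, hdiff, add_zero]
  split_ifs with h
  · rw [key, Set.inter_eq_self_of_subset_right (Set.singleton_subset_iff.mpr h)]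
    have h3 := measure_add_measure_compl (μ := ν) (measurableSet_singleton du)
    rw [hnull, add_zero] at h3
    rw [h3]
    exact huniv
  · rw [key, Set.inter_singleton_eq_empty.mpr h, measure_empty]
    simp

open Classical in
lemma E_euH (hE : IsDiagSpectralMeasure d E μ) (u : V) {σ : Set ℝ}
    (hσ : MeasurableSet σ) :
    E σ (euH u) = (if d u ∈ σ then (1 : ℂ) else 0) • euH u := by
  have hre : (⟪E σ (euH u), euH u⟫).re = if d u ∈ σ then 1 else 0 := by
    rw [← hE.compat (euH u) σ hσ, mu_eu hE u hσ]
  split_ifs with h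
  · rw [one_smul]
    simp only [h, if_true] at hre
    have hn : ‖E σ (euH u) - euH u‖ ^ 2 = 0 := by
      have hns := @norm_sub_sq ℂ _ _ _ _ (E σ (euH u)) (euH u)
      rw [hns, norm_sq_E hE hσ]
      have : RCLike.re ⟪E σ (euH u), euH u⟫ = (⟪E σ (euH u), euH u⟫).re := rfl
      rw [this, hre, norm_sq_euH]
      ring
    have := pow_eq_zero_iff (n := 2) (by norm_num) |>.mp hn
    rw [norm_eq_zero, sub_eq_zero] at this
    exact this
  · rw [zero_smul]
    simp only [h, if_false] at hre
    have hn : ‖E σ (euH u)‖ ^ 2 = 0 := by rw [norm_sq_E hE hσ, hre]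
    have := pow_eq_zero_iff (n := 2) (by norm_num) |>.mp hn
    rwa [norm_eq_zero] at this

open Classical in
lemma E_coord (hE : IsDiagSpectralMeasure d E μ) {σ : Set ℝ}
    (hσ : MeasurableSet σ) (g : H V) (u : V) :
    (E σ g : V → ℂ) u = (if d u ∈ σ then (1 : ℂ) else 0) * g u := by
  have h1 : ⟪euH u, E σ g⟫ = (E σ g) u := inner_euH u _
  have h2 : ⟪(ContinuousLinearMap.adjoint (E σ)) (euH u), g⟫ = ⟪euH u, E σ g⟫ :=
    ContinuousLinearMap.adjoint_inner_left (E σ) g (euH u)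
  rw [← h1, ← h2, hE.selfadj σ hσ, E_euH hE u hσ, inner_smul_left]
  split_ifs <;> simp [inner_euH]

open Classical in
lemma re_inner_E (hE : IsDiagSpectralMeasure d E μ) {σ : Set ℝ}
    (hσ : MeasurableSet σ) (g : H V) :
    (⟪E σ g, g⟫).re = ∑' v, if d v ∈ σ then ‖g v‖ ^ 2 else 0 := by
  have h0 : (⟪E σ g, g⟫).re = ‖E σ g‖ ^ 2 := (norm_sq_E hE hσ g).symm
  rw [h0, norm_sq_eq]
  refine tsum_congr fun v => ?_
  rw [E_coord hE hσ g v]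
  split_ifs <;> simp

end Abstract2

end WQN
end

open Classical in
/-- Weak quasinormality of a densely defined weighted shift on a directed tree: the
inequality `⟨E(σ)|S_λ|f, |S_λ|f⟩ ≤ c ⟨E(σ)S_λ f, S_λ f⟩` holds for all Borel `σ` and all
`f` in the domain of `S_λ` (where `E` is the spectral measure of `|S_λ|`) iff
`‖S_λ e_u‖² ≤ c · Σ_{v ∈ Chi(u), ‖S_λ e_v‖ = ‖S_λ e_u‖} |λ_v|²` for every `u`. -/
theorem weighted_shift_weakly_quasinormal_iff {V : Type*} (T : DirectedTree V)
    (lam : V → ℂ)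
    (hdense : Dense {f : lp (fun _ : V => ℂ) 2 | Memℓp (shiftFun T lam (fun v => f v)) 2})
    (he : ∀ u : V, Memℓp (shiftFun T lam (eVec u)) 2)
    (c : ℝ) (hc : 0 ≤ c) :
    (∀ (E : Set ℝ → (lp (fun _ : V => ℂ) 2 →L[ℂ] lp (fun _ : V => ℂ) 2))
        (μ : lp (fun _ : V => ℂ) 2 → Measure ℝ),
      IsDiagSpectralMeasure (swnorm T lam he) E μ →
      ∀ (σ : Set ℝ), MeasurableSet σ →
        ∀ (f : lp (fun _ : V => ℂ) 2) (hf : Memℓp (shiftFun T lam (fun v => f v)) 2)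
          (hf' : Memℓp (fun v => ((swnorm T lam he v : ℝ) : ℂ) * f v) 2),
          (⟪E σ (⟨fun v => ((swnorm T lam he v : ℝ) : ℂ) * f v, hf'⟩ :
              lp (fun _ : V => ℂ) 2),
            (⟨fun v => ((swnorm T lam he v : ℝ) : ℂ) * f v, hf'⟩ :
              lp (fun _ : V => ℂ) 2)⟫).re ≤
          c * (⟪E σ (⟨shiftFun T lam (fun v => f v), hf⟩ : lp (fun _ : V => ℂ) 2),
            (⟨shiftFun T lam (fun v => f v), hf⟩ : lp (fun _ : V => ℂ) 2)⟫).re) ↔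
    (∀ u : V, swnorm T lam he u ^ 2 ≤
      c * ∑' v : V, if ¬ T.isRoot v ∧ T.par v = u ∧ swnorm T lam he v = swnorm T lam he u
        then ‖lam v‖ ^ 2 else 0) := by
  classical
  constructor
  · -- forward: apply hypothesis to the concrete diagonal spectral measure
    intro h u
    have hd : ∀ v, 0 ≤ swnorm T lam he v := fun v => norm_nonneg _
    have hf : Memℓp (shiftFun T lam (fun v => (WQN.euH u : lp (fun _ : V => ℂ) 2) v)) 2 :=
      he u
    have hf' := WQN.memℓp_dmul_euH (swnorm T lam he) u
    have H := h (WQN.diagE (swnorm T lam he)) (WQN.diagμ (swnorm T lam he))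
      (WQN.isDiag (swnorm T lam he) hd) {swnorm T lam he u}
      (measurableSet_singleton _) (WQN.euH u) hf hf'
    have hL : (⟪WQN.diagE (swnorm T lam he) {swnorm T lam he u}
          (⟨fun v => ((swnorm T lam he v : ℝ) : ℂ) * (WQN.euH u : lp (fun _ : V => ℂ) 2) v, hf'⟩ :
            lp (fun _ : V => ℂ) 2),
          (⟨fun v => ((swnorm T lam he v : ℝ) : ℂ) * (WQN.euH u : lp (fun _ : V => ℂ) 2) v, hf'⟩ :
            lp (fun _ : V => ℂ) 2)⟫).re = swnorm T lam he u ^ 2 := by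
      rw [show WQN.diagE (swnorm T lam he) {swnorm T lam he u}
          = WQN.indCLM (fun v => swnorm T lam he v ∈ ({swnorm T lam he u} : Set ℝ)) from rfl,
        WQN.re_inner_indicator]
      have e : ∀ v : V, (if swnorm T lam he v ∈ ({swnorm T lam he u} : Set ℝ) then
          ‖((⟨fun v => ((swnorm T lam he v : ℝ) : ℂ) * (WQN.euH u : lp (fun _ : V => ℂ) 2) v, hf'⟩ :
            lp (fun _ : V => ℂ) 2) : V → ℂ) v‖ ^ 2 else 0)
          = if v = u then swnorm T lam he u ^ 2 else 0 := by
        intro v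
        show (if swnorm T lam he v ∈ ({swnorm T lam he u} : Set ℝ) then
          ‖((swnorm T lam he v : ℝ) : ℂ) * (WQN.euH u : lp (fun _ : V => ℂ) 2) v‖ ^ 2 else 0) = _
        rw [WQN.euH_apply]
        by_cases hv : v = u
        · subst hv
          simp [Set.mem_singleton_iff, WQN.norm_real_mul_sq]
        · simp [hv]
      exact (tsum_congr e).trans (tsum_ite_eq _ _)
    have hR : (⟪WQN.diagE (swnorm T lam he) {swnorm T lam he u}
          (⟨shiftFun T lam (fun v => (WQN.euH u : lp (fun _ : V => ℂ) 2) v), hf⟩ :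
            lp (fun _ : V => ℂ) 2),
          (⟨shiftFun T lam (fun v => (WQN.euH u : lp (fun _ : V => ℂ) 2) v), hf⟩ :
            lp (fun _ : V => ℂ) 2)⟫).re
        = ∑' v : V, if ¬ T.isRoot v ∧ T.par v = u ∧ swnorm T lam he v = swnorm T lam he u
            then ‖lam v‖ ^ 2 else 0 := by
      rw [show WQN.diagE (swnorm T lam he) {swnorm T lam he u}
          = WQN.indCLM (fun v => swnorm T lam he v ∈ ({swnorm T lam he u} : Set ℝ)) from rfl,
        WQN.re_inner_indicator]
      refine tsum_congr fun w => ?_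
      show (if swnorm T lam he w ∈ ({swnorm T lam he u} : Set ℝ) then
          ‖shiftFun T lam (fun v => (WQN.euH u : lp (fun _ : V => ℂ) 2) v) w‖ ^ 2 else 0) = _
      simp only [Set.mem_singleton_iff, shiftFun]
      rw [show (WQN.euH u : lp (fun _ : V => ℂ) 2) (T.par w) = if T.par w = u then 1 else 0 from
        WQN.euH_apply u (T.par w)]
      by_cases h1 : T.isRoot w
      · simp [h1]
      · by_cases h2 : T.par w = u
        · by_cases h3 : swnorm T lam he w = swnorm T lam he u
          · simp [h1, h2, h3]
          · simp [h1, h2, h3]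
        · simp [h1, h2]
    rw [hL, hR] at H
    exact H
  · -- backward
    intro hpt E μ hE σ hσ f hf hf'
    have hd : ∀ v, 0 ≤ swnorm T lam he v := fun v => norm_nonneg _
    rw [WQN.re_inner_E hE hσ, WQN.re_inner_E hE hσ]
    set d : V → ℝ := swnorm T lam he with hdd
    set A : V → ℝ := fun v => if d v ∈ σ then ‖f v‖ ^ 2 * d v ^ 2 else 0 with hA
    set B : V → ℝ := fun v =>
      if d v ∈ σ then ‖shiftFun T lam (fun w => f w) v‖ ^ 2 else 0 with hB
    have hAnn : ∀ v, 0 ≤ A v := fun v => by rw [hA]; dsimp only; split_ifs <;> positivity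
    have hBnn : ∀ v, 0 ≤ B v := fun v => by rw [hB]; dsimp only; split_ifs <;> positivity
    have hLHS : (∑' v, if d v ∈ σ then
        ‖((⟨fun v => ((d v : ℝ) : ℂ) * f v, hf'⟩ : lp (fun _ : V => ℂ) 2) : V → ℂ) v‖ ^ 2 else 0)
        = ∑' v, A v := by
      refine tsum_congr fun v => ?_
      rw [hA]
      dsimp only
      congr 1
      exact WQN.norm_real_mul_sq (d v) (f v)
    have hRHS : (∑' v, if d v ∈ σ then
        ‖((⟨shiftFun T lam (fun w => f w), hf⟩ : lp (fun _ : V => ℂ) 2) : V → ℂ) v‖ ^ 2 else 0)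
        = ∑' v, B v := by
      refine tsum_congr fun v => ?_
      rw [hB]
    rw [hLHS, hRHS]
    -- summability
    have hAsum : Summable A := by
      refine Summable.of_nonneg_of_le hAnn (fun v => ?_)
        (WQN.summable_norm_sq (⟨fun v => ((d v : ℝ) : ℂ) * f v, hf'⟩ : lp (fun _ : V => ℂ) 2))
      rw [hA]
      dsimp only
      rw [show ‖((⟨fun v => ((d v : ℝ) : ℂ) * f v, hf'⟩ : lp (fun _ : V => ℂ) 2) : V → ℂ) v‖ ^ 2
        = ‖f v‖ ^ 2 * d v ^ 2 from WQN.norm_real_mul_sq (d v) (f v)]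
      split_ifs
      · exact le_rfl
      · positivity
    have hBsum : Summable B := by
      refine Summable.of_nonneg_of_le hBnn (fun v => ?_)
        (WQN.summable_norm_sq (⟨shiftFun T lam (fun w => f w), hf⟩ : lp (fun _ : V => ℂ) 2))
      rw [hB]
      dsimp only
      split_ifs
      · exact le_rfl
      · positivity
    -- key ENNReal computation
    have key : (∑' v, ENNReal.ofReal (A v)) ≤ ENNReal.ofReal c * ∑' w, ENNReal.ofReal (B w) := by
      have step1 : ∀ v, ENNReal.ofReal (A v) ≤ ENNReal.ofReal c *
          ∑' w, ENNReal.ofReal ((if ¬ T.isRoot w ∧ T.par w = v ∧ d w ∈ σ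
            then ‖lam w‖ ^ 2 else 0) * ‖f v‖ ^ 2) := by
        intro v
        by_cases hv : d v ∈ σ
        · have h1 := hpt v
          have hrnn : ∀ w : V, (0:ℝ) ≤ if ¬ T.isRoot w ∧ T.par w = v ∧ d w = d v
              then ‖lam w‖ ^ 2 else 0 := fun w => by split_ifs <;> positivity
          calc ENNReal.ofReal (A v)
              = ENNReal.ofReal (d v ^ 2) * ENNReal.ofReal (‖f v‖ ^ 2) := by
                rw [← ENNReal.ofReal_mul (sq_nonneg _)]
                rw [hA]
                dsimp only
                rw [if_pos hv, mul_comm]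
            _ ≤ ENNReal.ofReal (c * ∑' w, if ¬ T.isRoot w ∧ T.par w = v ∧ d w = d v
                  then ‖lam w‖ ^ 2 else 0) * ENNReal.ofReal (‖f v‖ ^ 2) :=
                mul_le_mul_left (ENNReal.ofReal_le_ofReal h1) _
            _ ≤ (ENNReal.ofReal c * ∑' w, ENNReal.ofReal (if ¬ T.isRoot w ∧ T.par w = v ∧ d w = d v
                  then ‖lam w‖ ^ 2 else 0)) * ENNReal.ofReal (‖f v‖ ^ 2) := by
                rw [ENNReal.ofReal_mul hc]
                exact mul_le_mul_left
                  (mul_le_mul_right (WQN.ofReal_tsum_le_tsum_ofReal hrnn) _) _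
            _ = ENNReal.ofReal c * ∑' w, (ENNReal.ofReal (if ¬ T.isRoot w ∧ T.par w = v ∧ d w = d v
                  then ‖lam w‖ ^ 2 else 0) * ENNReal.ofReal (‖f v‖ ^ 2)) := by
                rw [mul_assoc, ENNReal.tsum_mul_right]
            _ ≤ ENNReal.ofReal c * ∑' w, ENNReal.ofReal ((if ¬ T.isRoot w ∧ T.par w = v ∧ d w ∈ σ
                  then ‖lam w‖ ^ 2 else 0) * ‖f v‖ ^ 2) := by
                refine mul_le_mul_right (ENNReal.tsum_le_tsum fun w => ?_) _
                rw [← ENNReal.ofReal_mul (hrnn w)]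
                apply ENNReal.ofReal_le_ofReal
                refine mul_le_mul_of_nonneg_right ?_ (by positivity)
                split_ifs with hc1 hc2 hc2
                · exact le_rfl
                · exact absurd ⟨hc1.1, hc1.2.1, hc1.2.2 ▸ hv⟩ hc2
                · positivity
                · exact le_rfl
        · rw [hA]
          dsimp only
          rw [if_neg hv]
          simp
      calc (∑' v, ENNReal.ofReal (A v))
          ≤ ∑' v, (ENNReal.ofReal c *
            ∑' w, ENNReal.ofReal ((if ¬ T.isRoot w ∧ T.par w = v ∧ d w ∈ σ
              then ‖lam w‖ ^ 2 else 0) * ‖f v‖ ^ 2)) := ENNReal.tsum_le_tsum step1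
        _ = ENNReal.ofReal c * ∑' v, ∑' w,
              ENNReal.ofReal ((if ¬ T.isRoot w ∧ T.par w = v ∧ d w ∈ σ
                then ‖lam w‖ ^ 2 else 0) * ‖f v‖ ^ 2) := by rw [ENNReal.tsum_mul_left]
        _ = ENNReal.ofReal c * ∑' w, ∑' v,
              ENNReal.ofReal ((if ¬ T.isRoot w ∧ T.par w = v ∧ d w ∈ σ
                then ‖lam w‖ ^ 2 else 0) * ‖f v‖ ^ 2) := by rw [ENNReal.tsum_comm]
        _ = ENNReal.ofReal c * ∑' w, ENNReal.ofReal (B w) := by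
            congr 1
            refine tsum_congr fun w => ?_
            have e : ∀ v : V, ENNReal.ofReal ((if ¬ T.isRoot w ∧ T.par w = v ∧ d w ∈ σ
                then ‖lam w‖ ^ 2 else 0) * ‖f v‖ ^ 2)
                = if v = T.par w then ENNReal.ofReal (B w) else 0 := by
              intro v
              by_cases hv : v = T.par w
              · subst hv
                rw [if_pos rfl, hB]
                dsimp only
                by_cases h1 : T.isRoot w
                · have hbz : shiftFun T lam (fun w => f w) w = 0 := by
                    simp [shiftFun, h1]
                  simp [h1, hbz]
                · by_cases h2 : d w ∈ σ
                  · rw [if_pos ⟨h1, rfl, h2⟩, if_pos h2]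
                    congr 1
                    rw [show shiftFun T lam (fun w => f w) w = lam w * f (T.par w) from
                      by simp [shiftFun, h1]]
                    rw [norm_mul, mul_pow]
                  · rw [if_neg (by tauto), if_neg h2]
                    simp
              · rw [if_neg hv, if_neg (fun hh => hv hh.2.1.symm)]
                simp
            rw [tsum_congr e, tsum_ite_eq]
    -- conclude in ℝ
    have h1 : ENNReal.ofReal (∑' v, A v) = ∑' v, ENNReal.ofReal (A v) :=
      ENNReal.ofReal_tsum_of_nonneg hAnn hAsum
    have h2 : ENNReal.ofReal (∑' v, B v) = ∑' v, ENNReal.ofReal (B v) :=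
      ENNReal.ofReal_tsum_of_nonneg hBnn hBsum
    have h3 : ENNReal.ofReal (∑' v, A v) ≤ ENNReal.ofReal (c * ∑' v, B v) := by
      rw [h1, ENNReal.ofReal_mul hc, h2]
      exact key
    exact (ENNReal.ofReal_le_ofReal_iff
      (mul_nonneg hc (tsum_nonneg hBnn))).mp h3
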